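/- In the Kingman n-coalescent, for a fixed set A with |A| = i, the expectation of the reciprocal of the final level satisfies E(1/J_A) ≤ 2/C(n,i), with the convention 1/J_A = 0 when J_A = ∞. -/

import Mathlib

open Finset

/-- A (purely topological) history of the Kingman `n`-coalescent: `c k` is the set of blocks
of the partition when `k` lineages remain; at each level `2 ≤ k ≤ n` a pair of blocks merges.
A history is uniformly distributed among all such merging histories. -/
def IsHistory (n : ℕ) (c : ℕ → Finset (Finset (Fin n))) : Prop :=
  (∀ k, k = 0 ∨ n < k → c k = ∅) ∧
  c n = Finset.univ.image (fun i => ({i} : Finset (Fin n))) ∧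
  ∀ k, 2 ≤ k → k ≤ n → ∃ B₁ ∈ c k, ∃ B₂ ∈ c k, B₁ ≠ B₂ ∧
    c (k - 1) = (c k \ {B₁, B₂}) ∪ {B₁ ∪ B₂}

/-- Probability of an event under the uniform distribution on coalescent histories. -/
noncomputable def histProb (n : ℕ) (E : (ℕ → Finset (Finset (Fin n))) → Prop) : ℝ :=
  ({c | IsHistory n c ∧ E c}.ncard : ℝ) / ({c | IsHistory n c}.ncard : ℝ)

/-- Expectation of a functional under the uniform distribution on coalescent histories. -/
noncomputable def histExp (n : ℕ) (f : (ℕ → Finset (Finset (Fin n))) → ℝ) : ℝ :=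
  (∑ᶠ c ∈ {c | IsHistory n c}, f c) / ({c | IsHistory n c}.ncard : ℝ)

/-- `KLevel A c` is the initial level of the branch supporting exactly the leaves in `A`:
the largest number of blocks `k` at which `A` is a block (`0` if `A` is never a block,
corresponding to the convention `K_A = ∞`). -/
noncomputable def KLevel {n : ℕ} (A : Finset (Fin n))
    (c : ℕ → Finset (Finset (Fin n))) : ℕ :=
  sSup {k | A ∈ c k}

/-- `JLevel A c` is the final level of the branch supporting exactly the leaves in `A`:
the largest level `j < K_A` at which `A` is not a block (`0` if no such branch exists,
corresponding to the convention `J_A = ∞`). -/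
noncomputable def JLevel {n : ℕ} (A : Finset (Fin n))
    (c : ℕ → Finset (Finset (Fin n))) : ℕ :=
  sSup {j | j < KLevel A c ∧ A ∉ c j}

namespace KC

variable {n : ℕ}

def IsPart (P : Finset (Finset (Fin n))) : Prop :=
  (∀ B ∈ P, B.Nonempty) ∧ (∀ B ∈ P, ∀ B' ∈ P, B ≠ B' → Disjoint B B')

def HistSet (k : ℕ) (P : Finset (Finset (Fin n))) : Set (ℕ → Finset (Finset (Fin n))) :=
  {c | (∀ m, m = 0 ∨ k < m → c m = ∅) ∧
    c k = P ∧
    ∀ m, 2 ≤ m → m ≤ k → ∃ B₁ ∈ c m, ∃ B₂ ∈ c m, B₁ ≠ B₂ ∧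
      c (m - 1) = (c m \ {B₁, B₂}) ∪ {B₁ ∪ B₂}}

lemma histSet_finite (k : ℕ) (P : Finset (Finset (Fin n))) : (HistSet k P).Finite := by
  apply Set.Finite.of_finite_image (f := fun c (j : Fin (k+1)) => c (j : ℕ))
  · exact Set.toFinite _
  · intro c₁ h₁ c₂ h₂ he
    funext m
    by_cases hm : m ≤ k
    · have := congrFun he ⟨m, Nat.lt_succ_of_le hm⟩
      simpa using this
    · rw [h₁.1 m (Or.inr (lt_of_not_ge hm)), h₂.1 m (Or.inr (lt_of_not_ge hm))]

noncomputable def HF (k : ℕ) (P : Finset (Finset (Fin n))) :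
    Finset (ℕ → Finset (Finset (Fin n))) := (histSet_finite k P).toFinset

lemma mem_HF {k : ℕ} {P : Finset (Finset (Fin n))} {c} :
    c ∈ HF k P ↔ c ∈ HistSet k P := Set.Finite.mem_toFinset _

def mP (P Q : Finset (Finset (Fin n))) : Finset (Finset (Fin n)) :=
  (P \ Q) ∪ {Q.sup id}

lemma mP_pair (P : Finset (Finset (Fin n))) (B₁ B₂ : Finset (Fin n)) :
    mP P {B₁, B₂} = (P \ {B₁, B₂}) ∪ {B₁ ∪ B₂} := by
  simp [mP, Finset.sup_insert, Finset.sup_singleton, Finset.sup_eq_union]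

section part
variable {P : Finset (Finset (Fin n))} {B₁ B₂ : Finset (Fin n)}

lemma union_not_mem (hP : IsPart P) (h1 : B₁ ∈ P) (h2 : B₂ ∈ P) (hne : B₁ ≠ B₂) :
    B₁ ∪ B₂ ∉ P := by
  intro h
  by_cases he : B₁ ∪ B₂ = B₁
  · have hsub : B₂ ⊆ B₁ := by
      intro x hx; rw [← he]; exact Finset.mem_union_right _ hx
    have hd := hP.2 B₂ h2 B₁ h1 hne.symm
    have := hP.1 B₂ h2
    rw [Finset.disjoint_left] at hd
    obtain ⟨x, hx⟩ := this
    exact hd hx (hsub hx)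
  · have hd := hP.2 _ h _ h1 he
    rw [Finset.disjoint_left] at hd
    obtain ⟨x, hx⟩ := hP.1 B₁ h1
    exact hd (Finset.mem_union_left _ hx) hx

lemma merged_isPart (hP : IsPart P) (h1 : B₁ ∈ P) (h2 : B₂ ∈ P) (hne : B₁ ≠ B₂) :
    IsPart ((P \ {B₁, B₂}) ∪ {B₁ ∪ B₂}) := by
  constructor
  · intro B hB
    rcases Finset.mem_union.1 hB with h | h
    · exact hP.1 B (Finset.mem_sdiff.1 h).1
    · rw [Finset.mem_singleton] at h; subst h
      obtain ⟨x, hx⟩ := hP.1 B₁ h1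
      exact ⟨x, Finset.mem_union_left _ hx⟩
  · intro B hB B' hB' hBB'
    rcases Finset.mem_union.1 hB with h | h <;> rcases Finset.mem_union.1 hB' with h' | h'
    · exact hP.2 B (Finset.mem_sdiff.1 h).1 B' (Finset.mem_sdiff.1 h').1 hBB'
    · rw [Finset.mem_singleton] at h'; subst h'
      have hBp := Finset.mem_sdiff.1 h
      have hd1 : Disjoint B B₁ := hP.2 B hBp.1 B₁ h1 (by
        intro hx; exact hBp.2 (by rw [hx]; simp))
      have hd2 : Disjoint B B₂ := hP.2 B hBp.1 B₂ h2 (by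
        intro hx; exact hBp.2 (by rw [hx]; simp))
      simpa [Finset.disjoint_union_right] using And.intro hd1 hd2
    · rw [Finset.mem_singleton] at h; subst h
      have hBp := Finset.mem_sdiff.1 h'
      have hd1 : Disjoint B' B₁ := hP.2 B' hBp.1 B₁ h1 (by
        intro hx; exact hBp.2 (by rw [hx]; simp))
      have hd2 : Disjoint B' B₂ := hP.2 B' hBp.1 B₂ h2 (by
        intro hx; exact hBp.2 (by rw [hx]; simp))
      exact Disjoint.symm (by simpa [Finset.disjoint_union_right] using And.intro hd1 hd2)
    · rw [Finset.mem_singleton] at h h'; exact absurd (h.trans h'.symm) hBB'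

lemma merged_card (hP : IsPart P) (h1 : B₁ ∈ P) (h2 : B₂ ∈ P) (hne : B₁ ≠ B₂) :
    ((P \ {B₁, B₂}) ∪ {B₁ ∪ B₂}).card = P.card - 1 := by
  have hnm : B₁ ∪ B₂ ∉ P \ {B₁, B₂} := fun h =>
    union_not_mem hP h1 h2 hne (Finset.mem_sdiff.1 h).1
  have hsub : {B₁, B₂} ⊆ P := by
    intro x hx; rcases Finset.mem_insert.1 hx with h | h
    · exact h ▸ h1
    · rw [Finset.mem_singleton] at h; exact h ▸ h2
  have hcard2 : ({B₁, B₂} : Finset (Finset (Fin n))).card = 2 := Finset.card_pair hne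
  have h2le : 2 ≤ P.card := hcard2 ▸ Finset.card_le_card hsub
  rw [Finset.union_comm, ← Finset.insert_eq, Finset.card_insert_of_notMem hnm,
    Finset.card_sdiff_of_subset hsub, hcard2]
  omega

lemma sdiff_merged (hP : IsPart P) (h1 : B₁ ∈ P) (h2 : B₂ ∈ P) (hne : B₁ ≠ B₂) :
    P \ ((P \ {B₁, B₂}) ∪ {B₁ ∪ B₂}) = {B₁, B₂} := by
  have hun := union_not_mem hP h1 h2 hne
  ext B
  constructor
  · intro h
    have hBP := (Finset.mem_sdiff.1 h).1
    have hnot := (Finset.mem_sdiff.1 h).2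
    by_contra hc
    exact hnot (Finset.mem_union_left _ (Finset.mem_sdiff.2 ⟨hBP, hc⟩))
  · intro h
    rcases Finset.mem_insert.1 h with rfl | h
    · refine Finset.mem_sdiff.2 ⟨h1, fun hmem => ?_⟩
      rcases Finset.mem_union.1 hmem with hx | hx
      · exact (Finset.mem_sdiff.1 hx).2 (by simp)
      · rw [Finset.mem_singleton] at hx
        exact hun (hx ▸ h1)
    · rw [Finset.mem_singleton] at h
      subst h
      refine Finset.mem_sdiff.2 ⟨h2, fun hmem => ?_⟩
      rcases Finset.mem_union.1 hmem with hx | hx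
      · exact (Finset.mem_sdiff.1 hx).2 (by simp)
      · rw [Finset.mem_singleton] at hx
        exact hun (hx ▸ h2)

end part

def Compat (A : Finset (Fin n)) (P : Finset (Finset (Fin n))) : Prop :=
  ∀ B ∈ P, ¬ Disjoint B A → B ⊆ A

lemma compat_of_mem {A : Finset (Fin n)} {P} (hP : IsPart P) (hA : A ∈ P) : Compat A P := by
  intro B hB hd
  by_cases h : B = A
  · exact h ▸ Finset.Subset.refl A
  · exact absurd (hP.2 B hB A hA h) hd

lemma compat_merge_rev {A B₁ B₂ : Finset (Fin n)} {P} (h1 : B₁ ∈ P) (h2 : B₂ ∈ P)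
    (hc : Compat A ((P \ {B₁, B₂}) ∪ {B₁ ∪ B₂})) : Compat A P := by
  intro B hB hd
  by_cases hB12 : B = B₁ ∨ B = B₂
  · have hdu : ¬ Disjoint (B₁ ∪ B₂) A := by
      intro hdu
      rw [Finset.disjoint_union_left] at hdu
      rcases hB12 with rfl | rfl
      · exact hd hdu.1
      · exact hd hdu.2
    have hsub : B₁ ∪ B₂ ⊆ A :=
      hc _ (Finset.mem_union_right _ (Finset.mem_singleton_self _)) hdu
    rcases hB12 with rfl | rfl
    · exact (Finset.union_subset_iff.1 hsub).1
    · exact (Finset.union_subset_iff.1 hsub).2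
  · push_neg at hB12
    refine hc B (Finset.mem_union_left _ (Finset.mem_sdiff.2 ⟨hB, ?_⟩)) hd
    simp [hB12.1, hB12.2]

def extH (k : ℕ) (P : Finset (Finset (Fin n))) (c : ℕ → Finset (Finset (Fin n))) :
    ℕ → Finset (Finset (Fin n)) := fun m => if m = k then P else c m

def truncH (k : ℕ) (c : ℕ → Finset (Finset (Fin n))) :
    ℕ → Finset (Finset (Fin n)) := fun m => if m = k then ∅ else c m

lemma truncH_mem {k : ℕ} {P : Finset (Finset (Fin n))} {c} (hk : 1 ≤ k)
    (hc : c ∈ HistSet (k+1) P) : truncH (k+1) c ∈ HistSet k (c k) := by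
  obtain ⟨hz, htop, hm⟩ := hc
  refine ⟨?_, ?_, ?_⟩
  · intro m hm'
    rcases hm' with rfl | hm'
    · simpa [truncH] using hz 0 (Or.inl rfl)
    · by_cases hmk : m = k + 1
      · simp [truncH, hmk]
      · have : k + 1 < m := by omega
        simpa [truncH, hmk] using hz m (Or.inr this)
  · simp [truncH, Nat.ne_of_lt (Nat.lt_succ_self k)]
  · intro m h2 hmk
    obtain ⟨B₁, hB₁, B₂, hB₂, hne, heq⟩ := hm m h2 (by omega)
    have e1 : truncH (k+1) c m = c m := by
      unfold truncH; rw [if_neg (by omega : ¬ m = k + 1)]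
    have e2 : truncH (k+1) c (m-1) = c (m-1) := by
      unfold truncH; rw [if_neg (by omega : ¬ m - 1 = k + 1)]
    rw [e1, e2]
    exact ⟨B₁, hB₁, B₂, hB₂, hne, heq⟩

lemma levels_isPart :
    ∀ (k : ℕ) (P : Finset (Finset (Fin n))) (c), IsPart P → c ∈ HistSet k P →
      ∀ m, 1 ≤ m → m ≤ k → IsPart (c m) := by
  intro k
  induction k with
  | zero => intro P c _ _ m h1 h0; omega
  | succ k ih =>
    intro P c hP hc m h1 hmk
    by_cases hm : m = k + 1
    · rw [hm, hc.2.1]; exact hP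
    · have hk1 : 1 ≤ k := by omega
      obtain ⟨B₁, hB₁, B₂, hB₂, hne, heq⟩ := hc.2.2 (k+1) (by omega) (le_refl _)
      rw [hc.2.1] at hB₁ hB₂
      have hPk : IsPart (c k) := by
        have : c (k+1-1) = (P \ {B₁, B₂}) ∪ {B₁ ∪ B₂} := by rw [heq, hc.2.1]
        simpa using this ▸ merged_isPart hP hB₁ hB₂ hne
      have hmem := truncH_mem hk1 hc
      have := ih (c k) (truncH (k+1) c) hPk hmem m h1 (by omega)
      simpa [truncH, hm] using this

lemma levels_ncompat {A : Finset (Fin n)} :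
    ∀ (k : ℕ) (P : Finset (Finset (Fin n))) (c), ¬ Compat A P → c ∈ HistSet k P →
      ∀ m, 1 ≤ m → m ≤ k → ¬ Compat A (c m) := by
  intro k
  induction k with
  | zero => intro P c _ _ m h1 h0; omega
  | succ k ih =>
    intro P c hnc hc m h1 hmk
    by_cases hm : m = k + 1
    · rw [hm, hc.2.1]; exact hnc
    · have hk1 : 1 ≤ k := by omega
      obtain ⟨B₁, hB₁, B₂, hB₂, hne, heq⟩ := hc.2.2 (k+1) (by omega) (le_refl _)
      rw [hc.2.1] at hB₁ hB₂
      have hnck : ¬ Compat A (c k) := by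
        intro hcompat
        apply hnc
        apply compat_merge_rev hB₁ hB₂
        have : c (k+1-1) = (c (k+1) \ {B₁, B₂}) ∪ {B₁ ∪ B₂} := heq
        rw [Nat.add_sub_cancel, hc.2.1] at this
        rwa [this] at hcompat
      have := ih (c k) (truncH (k+1) c) hnck (truncH_mem hk1 hc) m h1 (by omega)
      simpa [truncH, hm] using this

lemma never_mem {A : Finset (Fin n)} {k P c} (hP : IsPart P) (hnc : ¬ Compat A P)
    (hc : c ∈ HistSet k P) : ∀ m, A ∉ c m := by
  intro m hmem
  by_cases hb : 1 ≤ m ∧ m ≤ k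
  · have hpart := levels_isPart k P c hP hc m hb.1 hb.2
    exact levels_ncompat k P c hnc hc m hb.1 hb.2 (compat_of_mem hpart hmem)
  · have : c m = ∅ := hc.1 m (by omega)
    rw [this] at hmem
    exact absurd hmem (Finset.notMem_empty _)

lemma natSSup_eq {s : Set ℕ} {a : ℕ} (h1 : a ∈ s) (h2 : ∀ b ∈ s, b ≤ a) : sSup s = a :=
  le_antisymm (csSup_le ⟨a, h1⟩ h2) (le_csSup ⟨a, h2⟩ h1)

lemma JLevel_eq_zero_of_never {A : Finset (Fin n)} {c} (h : ∀ m, A ∉ c m) :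
    JLevel A c = 0 := by
  have hK : KLevel A c = 0 := by
    have : {k | A ∈ c k} = ∅ := Set.eq_empty_of_forall_notMem (fun m hm => h m hm)
    rw [KLevel, this, csSup_empty]
    rfl
  have : {j | j < KLevel A c ∧ A ∉ c j} = ∅ := by
    rw [hK]
    exact Set.eq_empty_of_forall_notMem (fun j hj => Nat.not_lt_zero j hj.1)
  rw [JLevel, this, csSup_empty]
  rfl

lemma le_of_hist {A : Finset (Fin n)} {k P c m} (hc : c ∈ HistSet k P) (h : A ∈ c m) :
    m ≤ k := by
  by_contra h'
  rw [hc.1 m (Or.inr (by omega))] at h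
  exact absurd h (Finset.notMem_empty _)

lemma JLevel_eq_of_merge_top {A : Finset (Fin n)} {k P c} (hk : 1 ≤ k)
    (hc : c ∈ HistSet (k+1) P) (htop : A ∈ c (k+1)) (hbelow : ∀ m, m ≤ k → A ∉ c m) :
    JLevel A c = k := by
  have hK : KLevel A c = k + 1 := natSSup_eq htop (fun m hm => le_of_hist hc hm)
  rw [JLevel, hK]
  exact natSSup_eq ⟨Nat.lt_succ_self k, hbelow k (le_refl k)⟩
    (fun j hj => by have := hj.1; omega)

lemma JLevel_trunc {A : Finset (Fin n)} {k P c} (hk : 1 ≤ k)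
    (hc : c ∈ HistSet (k+1) P) (hcase : A ∉ c (k+1) ∨ A ∈ c k) :
    JLevel A c = JLevel A (truncH (k+1) c) := by
  have htr : ∀ m, m ≠ k + 1 → truncH (k+1) c m = c m := by
    intro m hm; unfold truncH; rw [if_neg hm]
  by_cases htop : A ∈ c (k+1)
  · have hAk : A ∈ c k := by
      rcases hcase with h | h
      · exact absurd htop h
      · exact h
    have hKc : KLevel A c = k + 1 := natSSup_eq htop (fun m hm => le_of_hist hc hm)
    have hKt : KLevel A (truncH (k+1) c) = k := by
      apply natSSup_eq
      · rw [Set.mem_setOf_eq, htr k (by omega)]; exact hAk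
      · intro m hm
        rw [Set.mem_setOf_eq] at hm
        by_cases hmk : m = k + 1
        · rw [hmk] at hm; unfold truncH at hm; rw [if_pos rfl] at hm
          exact absurd hm (Finset.notMem_empty _)
        · rw [htr m hmk] at hm
          have := le_of_hist hc hm
          omega
    rw [JLevel, JLevel, hKc, hKt]
    congr 1
    ext j
    simp only [Set.mem_setOf_eq]
    constructor
    · rintro ⟨hj1, hj2⟩
      have hjk : j ≠ k := fun h => hj2 (h ▸ hAk)
      exact ⟨by omega, by rw [htr j (by omega)]; exact hj2⟩
    · rintro ⟨hj1, hj2⟩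
      rw [htr j (by omega)] at hj2
      exact ⟨by omega, hj2⟩
  · have hsets : {m | A ∈ c m} = {m | A ∈ truncH (k+1) c m} := by
      ext m
      by_cases hm : m = k + 1
      · subst hm
        simp only [Set.mem_setOf_eq]
        unfold truncH; rw [if_pos rfl]
        simp [htop]
      · simp only [Set.mem_setOf_eq]
        rw [htr m hm]
    have hK : KLevel A c = KLevel A (truncH (k+1) c) := by
      rw [KLevel, KLevel, hsets]
    by_cases hne : {m | A ∈ c m}.Nonempty
    · have hbdd : BddAbove {m | A ∈ c m} := ⟨k+1, fun m hm => le_of_hist hc hm⟩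
      have hmem := Nat.sSup_mem hne hbdd
      have hκ : KLevel A c ≤ k := by
        have h1 : KLevel A c ≤ k + 1 := le_of_hist hc hmem
        have h2 : KLevel A c ≠ k + 1 := fun h => htop (h ▸ hmem)
        omega
      rw [JLevel, JLevel, ← hK]
      congr 1
      ext j
      simp only [Set.mem_setOf_eq]
      constructor
      · rintro ⟨hj1, hj2⟩
        exact ⟨hj1, by rw [htr j (by omega)]; exact hj2⟩
      · rintro ⟨hj1, hj2⟩
        rw [htr j (by omega)] at hj2
        exact ⟨hj1, hj2⟩
    · have hem : {m | A ∈ c m} = ∅ := Set.not_nonempty_iff_eq_empty.1 hne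
      have h1 : ∀ m, A ∉ c m := by
        intro m hm; exact hne ⟨m, hm⟩
      have h2 : ∀ m, A ∉ truncH (k+1) c m := by
        intro m
        by_cases hm : m = k + 1
        · subst hm; unfold truncH; rw [if_pos rfl]; exact Finset.notMem_empty _
        · rw [htr m hm]; exact h1 m
      rw [JLevel_eq_zero_of_never h1, JLevel_eq_zero_of_never h2]

lemma pair_repr {P Q : Finset (Finset (Fin n))} (hQ : Q ∈ P.powersetCard 2) :
    ∃ B₁ B₂, B₁ ≠ B₂ ∧ Q = {B₁, B₂} ∧ B₁ ∈ P ∧ B₂ ∈ P := by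
  obtain ⟨hQP, hQ2⟩ := Finset.mem_powersetCard.1 hQ
  obtain ⟨B₁, B₂, hne, rfl⟩ := Finset.card_eq_two.1 hQ2
  exact ⟨B₁, B₂, hne, rfl, hQP (by simp), hQP (by simp)⟩

lemma mP_isPart {P Q : Finset (Finset (Fin n))} (hP : IsPart P) (hQ : Q ∈ P.powersetCard 2) :
    IsPart (mP P Q) := by
  obtain ⟨B₁, B₂, hne, rfl, h1, h2⟩ := pair_repr hQ
  rw [mP_pair]
  exact merged_isPart hP h1 h2 hne

lemma mP_card {P Q : Finset (Finset (Fin n))} (hP : IsPart P) (hQ : Q ∈ P.powersetCard 2) :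
    (mP P Q).card = P.card - 1 := by
  obtain ⟨B₁, B₂, hne, rfl, h1, h2⟩ := pair_repr hQ
  rw [mP_pair]
  exact merged_card hP h1 h2 hne

lemma sdiff_mP {P Q : Finset (Finset (Fin n))} (hP : IsPart P) (hQ : Q ∈ P.powersetCard 2) :
    P \ mP P Q = Q := by
  obtain ⟨B₁, B₂, hne, rfl, h1, h2⟩ := pair_repr hQ
  rw [mP_pair]
  exact sdiff_merged hP h1 h2 hne

lemma ext_mem {k : ℕ} {P Q : Finset (Finset (Fin n))} {c'} (hk : 1 ≤ k) (hP : IsPart P)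
    (hQ : Q ∈ P.powersetCard 2) (hc' : c' ∈ HistSet k (mP P Q)) :
    extH (k+1) P c' ∈ HistSet (k+1) P := by
  obtain ⟨B₁, B₂, hne, rfl, h1, h2⟩ := pair_repr hQ
  have hext : ∀ m, m ≠ k + 1 → extH (k+1) P c' m = c' m := by
    intro m hm; unfold extH; rw [if_neg hm]
  refine ⟨?_, ?_, ?_⟩
  · intro m hm
    rcases hm with rfl | hm
    · rw [hext 0 (by omega)]; exact hc'.1 0 (Or.inl rfl)
    · rw [hext m (by omega)]; exact hc'.1 m (Or.inr (by omega))
  · unfold extH; rw [if_pos rfl]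
  · intro m h2m hmk
    by_cases hm : m = k + 1
    · subst hm
      refine ⟨B₁, ?_, B₂, ?_, hne, ?_⟩
      · unfold extH; rw [if_pos rfl]; exact h1
      · unfold extH; rw [if_pos rfl]; exact h2
      · have e1 : extH (k+1) P c' (k+1-1) = c' k := by rw [Nat.add_sub_cancel, hext k (by omega)]
        have e2 : extH (k+1) P c' (k+1) = P := by unfold extH; rw [if_pos rfl]
        rw [e1, e2, hc'.2.1, mP_pair]
    · obtain ⟨C₁, hC₁, C₂, hC₂, hCne, heq⟩ := hc'.2.2 m h2m (by omega)
      rw [hext m hm, hext (m-1) (by omega)]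
      exact ⟨C₁, hC₁, C₂, hC₂, hCne, heq⟩

lemma extH_truncH {k : ℕ} {P : Finset (Finset (Fin n))} {c} (hc : c ∈ HistSet (k+1) P) :
    extH (k+1) P (truncH (k+1) c) = c := by
  funext m
  by_cases hm : m = k + 1
  · subst hm; unfold extH; rw [if_pos rfl, hc.2.1]
  · unfold extH truncH; rw [if_neg hm, if_neg hm]

lemma truncH_extH {k : ℕ} {P P' : Finset (Finset (Fin n))} {c'} (hc' : c' ∈ HistSet k P') :
    truncH (k+1) (extH (k+1) P c') = c' := by
  funext m
  by_cases hm : m = k + 1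
  · subst hm; unfold truncH; rw [if_pos rfl, hc'.1 (k+1) (Or.inr (by omega))]
  · unfold truncH extH; rw [if_neg hm, if_neg hm]

lemma sum_decomp {M : Type*} [AddCommMonoid M] {k : ℕ} {P : Finset (Finset (Fin n))}
    (hk : 1 ≤ k) (hP : IsPart P) (hcard : P.card = k + 1)
    (g : (ℕ → Finset (Finset (Fin n))) → M) :
    ∑ c ∈ HF (k+1) P, g c
      = ∑ Q ∈ P.powersetCard 2, ∑ c' ∈ HF k (mP P Q), g (extH (k+1) P c') := by
  rw [← Finset.sum_sigma (P.powersetCard 2) (fun Q => HF k (mP P Q))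
    (fun x => g (extH (k+1) P x.2))]
  symm
  refine Finset.sum_bij' (fun x _ => extH (k+1) P x.2)
    (fun c _ => ⟨P \ c k, truncH (k+1) c⟩) ?_ ?_ ?_ ?_ ?_
  · intro x hx
    have hx' := Finset.mem_sigma.1 hx
    exact mem_HF.2 (ext_mem hk hP hx'.1 (mem_HF.1 hx'.2))
  · intro c hc
    have hc' := mem_HF.1 hc
    obtain ⟨B₁, hB₁, B₂, hB₂, hne, heq⟩ := hc'.2.2 (k+1) (by omega) (le_refl _)
    rw [hc'.2.1] at hB₁ hB₂
    have hck : c k = (P \ {B₁, B₂}) ∪ {B₁ ∪ B₂} := by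
      have : c (k+1-1) = (c (k+1) \ {B₁, B₂}) ∪ {B₁ ∪ B₂} := heq
      rwa [Nat.add_sub_cancel, hc'.2.1] at this
    have hQeq : P \ c k = {B₁, B₂} := by rw [hck]; exact sdiff_merged hP hB₁ hB₂ hne
    have hQmem : P \ c k ∈ P.powersetCard 2 := by
      rw [hQeq]
      refine Finset.mem_powersetCard.2 ⟨?_, Finset.card_pair hne⟩
      intro x hx
      rcases Finset.mem_insert.1 hx with rfl | hx
      · exact hB₁
      · rw [Finset.mem_singleton] at hx; exact hx ▸ hB₂
    refine Finset.mem_sigma.2 ⟨hQmem, ?_⟩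
    have hmPeq : mP P (P \ c k) = c k := by
      rw [hQeq, mP_pair, ← hck]
    rw [hmPeq]
    exact mem_HF.2 (truncH_mem hk hc')
  · intro x hx
    have hx' := Finset.mem_sigma.1 hx
    have hc' := mem_HF.1 hx'.2
    have h1 : (extH (k+1) P x.2) k = mP P x.1 := by
      unfold extH; rw [if_neg (by omega : ¬ k = k + 1)]; exact hc'.2.1
    have h2 : P \ (extH (k+1) P x.2) k = x.1 := by rw [h1]; exact sdiff_mP hP hx'.1
    have h3 : truncH (k+1) (extH (k+1) P x.2) = x.2 := truncH_extH hc'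
    exact Sigma.ext h2 (heq_of_eq h3)
  · intro c hc
    exact extH_truncH (mem_HF.1 hc)
  · intro x hx
    rfl

def Dd (k : ℕ) : ℕ := ∏ j ∈ Finset.range (k-1), ((j+2).choose 2)

lemma Dd_pos (k : ℕ) : 0 < Dd k :=
  Finset.prod_pos (fun j _ => Nat.choose_pos (by omega))

lemma Dd_succ {k : ℕ} (hk : 1 ≤ k) : Dd (k+1) = (k+1).choose 2 * Dd k := by
  unfold Dd
  rw [show k + 1 - 1 = (k-1) + 1 by omega, Finset.prod_range_succ,
    show k - 1 + 2 = k + 1 by omega, mul_comm]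

lemma HF_card : ∀ (k : ℕ) (P : Finset (Finset (Fin n))), 1 ≤ k → IsPart P → P.card = k →
    (HF k P).card = Dd k := by
  intro k
  induction k with
  | zero => intro P h; omega
  | succ k ih =>
    intro P _ hP hcard
    by_cases hk : k = 0
    · subst hk
      have : HF 1 P = {fun m => if m = 1 then P else ∅} := by
        ext c
        rw [mem_HF, Finset.mem_singleton]
        constructor
        · intro hc
          funext m
          by_cases hm : m = 1
          · subst hm; rw [if_pos rfl]; exact hc.2.1
          · rw [if_neg hm]; exact hc.1 m (by omega)
        · rintro rfl
          refine ⟨?_, ?_, ?_⟩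
          · intro m hm
            have : m ≠ 1 := by omega
            simp [this]
          · simp
          · intro m h2 h1; omega
      rw [this, Finset.card_singleton]
      unfold Dd
      simp
    · have hk1 : 1 ≤ k := by omega
      have hsum : ∀ Q ∈ P.powersetCard 2, (HF k (mP P Q)).card = Dd k := by
        intro Q hQ
        exact ih (mP P Q) hk1 (mP_isPart hP hQ) (by rw [mP_card hP hQ, hcard]; omega)
      calc (HF (k+1) P).card = ∑ c ∈ HF (k+1) P, 1 := by
              rw [Finset.sum_const, smul_eq_mul, mul_one]
        _ = ∑ Q ∈ P.powersetCard 2, ∑ c' ∈ HF k (mP P Q), 1 :=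
              sum_decomp hk1 hP hcard (fun _ => 1)
        _ = ∑ Q ∈ P.powersetCard 2, (HF k (mP P Q)).card := by
              apply Finset.sum_congr rfl
              intro Q hQ
              rw [Finset.sum_const, smul_eq_mul, mul_one]
        _ = ∑ Q ∈ P.powersetCard 2, Dd k := Finset.sum_congr rfl hsum
        _ = (P.powersetCard 2).card * Dd k := by rw [Finset.sum_const, smul_eq_mul]
        _ = (k+1).choose 2 * Dd k := by rw [Finset.card_powersetCard, hcard]
        _ = Dd (k+1) := (Dd_succ hk1).symm

lemma succ_choose {k b : ℕ} (hb : 1 ≤ b) :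
    b * ((k+1).choose b) = (k+1) * (k.choose (b-1)) := by
  have h := Nat.add_one_mul_choose_eq k (b-1)
  rw [show b - 1 + 1 = b by omega] at h
  rw [h]
  exact Nat.mul_comm _ _

lemma choose_compl {k b : ℕ} (hb : b ≤ k + 1) :
    (k + 1 - b) * ((k+1).choose b) = (k+1) * (k.choose b) := by
  cases b with
  | zero => simp
  | succ b' =>
    have hpas : (k+1).choose (b'+1) = k.choose b' + k.choose (b'+1) :=
      Nat.choose_succ_succ k b'
    have h1 : (b'+1) * ((k+1).choose (b'+1)) = (k+1) * (k.choose b') :=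
      succ_choose (by omega)
    rw [Nat.sub_mul, h1, hpas, Nat.mul_add]
    exact Nat.add_sub_cancel_left _ _

lemma two_mul_choose_two (m : ℕ) : 2 * m.choose 2 = m * (m - 1) := by
  cases m with
  | zero => simp
  | succ m' =>
    have hdvd : 2 ∣ (m'+1) * m' := by
      rcases Nat.even_or_odd m' with h | h
      · exact Dvd.dvd.mul_left h.two_dvd _
      · exact Dvd.dvd.mul_right (Odd.add_one h).two_dvd _
    rw [Nat.choose_two_right, Nat.add_sub_cancel, Nat.mul_div_cancel' hdvd]

lemma NL1 {k : ℕ} (hk : 1 ≤ k) :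
    (k:ℝ) * ((k:ℝ))⁻¹ + (k.choose 2 : ℝ) * (2 / (k.choose 1 : ℝ))
      ≤ 2 / (((k+1).choose 1 : ℝ)) * (((k+1).choose 2 : ℝ)) := by
  have hk0 : (0:ℝ) < k := by exact_mod_cast hk
  have h2 : 2 * (k.choose 2 : ℝ) = (k:ℝ) * ((k:ℝ) - 1) := by
    have h := congrArg (Nat.cast (R := ℝ)) (two_mul_choose_two k)
    push_cast [Nat.cast_sub hk] at h
    linarith
  have ht : 2 * ((k+1).choose 2 : ℝ) = ((k:ℝ)+1) * (k:ℝ) := by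
    have h := two_mul_choose_two (k+1)
    rw [Nat.add_sub_cancel] at h
    exact_mod_cast h
  rw [Nat.choose_one_right, Nat.choose_one_right, mul_inv_cancel₀ hk0.ne']
  have e1 : (k.choose 2 : ℝ) * (2 / (k:ℝ)) = (k:ℝ) - 1 := by
    rw [show (k.choose 2 : ℝ) * (2 / (k:ℝ)) = (2 * (k.choose 2:ℝ)) / (k:ℝ) by ring, h2]
    rw [div_eq_iff hk0.ne']
    ring
  rw [e1]
  have hk10 : (0:ℝ) < (((k:ℕ)+1 : ℕ) : ℝ) := by positivity
  rw [div_mul_eq_mul_div, le_div_iff₀ hk10]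
  push_cast
  nlinarith [ht]

lemma NL2 {k b : ℕ} (hb : 1 ≤ b) (hbk : b ≤ k) :
    (b.choose 2 : ℝ) * (2 / (k.choose (b-1) : ℝ))
      + ((k+1-b).choose 2 : ℝ) * (2 / (k.choose b : ℝ))
      ≤ 2 / (((k+1).choose b : ℝ)) * (((k+1).choose 2 : ℝ)) := by
  have hx : (0:ℝ) < (k.choose (b-1) : ℝ) := by
    exact_mod_cast Nat.choose_pos (by omega)
  have hy : (0:ℝ) < (k.choose b : ℝ) := by exact_mod_cast Nat.choose_pos hbk
  have hz : (0:ℝ) < ((k+1).choose b : ℝ) := by exact_mod_cast Nat.choose_pos (by omega)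
  have hxz : (b:ℝ) * ((k+1).choose b : ℝ) = ((k:ℝ)+1) * (k.choose (b-1) : ℝ) := by
    have h := congrArg (Nat.cast (R := ℝ)) (succ_choose (k := k) hb)
    push_cast at h
    linarith
  have hyz : ((k:ℝ)+1-(b:ℝ)) * ((k+1).choose b : ℝ) = ((k:ℝ)+1) * (k.choose b : ℝ) := by
    have h := congrArg (Nat.cast (R := ℝ)) (choose_compl (k := k) (by omega : b ≤ k + 1))
    push_cast [Nat.cast_sub (show b ≤ k + 1 by omega)] at h
    linarith
  have hb2 : 2 * (b.choose 2 : ℝ) = (b:ℝ) * ((b:ℝ) - 1) := by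
    have h := congrArg (Nat.cast (R := ℝ)) (two_mul_choose_two b)
    push_cast [Nat.cast_sub hb] at h
    linarith
  have he2 : 2 * ((k+1-b).choose 2 : ℝ) = ((k:ℝ)+1-(b:ℝ)) * ((k:ℝ)-(b:ℝ)) := by
    have h := congrArg (Nat.cast (R := ℝ)) (two_mul_choose_two (k+1-b))
    rw [show k + 1 - b - 1 = k - b by omega] at h
    push_cast [Nat.cast_sub (show b ≤ k + 1 by omega), Nat.cast_sub hbk] at h
    linarith
  have ht2 : 2 * (((k+1).choose 2 : ℕ) : ℝ) = ((k:ℝ)+1) * (k:ℝ) := by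
    have h := two_mul_choose_two (k+1)
    rw [Nat.add_sub_cancel] at h
    exact_mod_cast h
  rw [show (b.choose 2 : ℝ) * (2 / (k.choose (b-1) : ℝ))
      = (2 * (b.choose 2 : ℝ)) / (k.choose (b-1) : ℝ) by ring,
    show ((k+1-b).choose 2 : ℝ) * (2 / (k.choose b : ℝ))
      = (2 * ((k+1-b).choose 2 : ℝ)) / (k.choose b : ℝ) by ring,
    show 2 / (((k+1).choose b : ℝ)) * (((k+1).choose 2 : ℝ))
      = (2 * (((k+1).choose 2 : ℝ))) / (((k+1).choose b : ℝ)) by ring,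
    hb2, he2, ht2,
    div_add_div _ _ hx.ne' hy.ne', div_le_div_iff₀ (by positivity) hz]
  have key : ((b:ℝ) * ((b:ℝ)-1) * ((k.choose b : ℕ) : ℝ)
        + ((k:ℝ)+1-(b:ℝ)) * ((k:ℝ)-(b:ℝ)) * ((k.choose (b-1) : ℕ) : ℝ)) * (((k+1).choose b : ℕ) : ℝ)
      = ((k:ℝ)+1) * ((k:ℝ)-1) * (((k.choose (b-1) : ℕ) : ℝ) * ((k.choose b : ℕ) : ℝ)) := by
    linear_combination (((b:ℝ)-1) * ((k.choose b : ℕ) : ℝ)) * hxz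
      + (((k:ℝ)-(b:ℝ)) * ((k.choose (b-1) : ℕ) : ℝ)) * hyz
  nlinarith [key, mul_pos hx hy,
    mul_nonneg (show (0:ℝ) ≤ (k:ℝ)+1 by positivity) (mul_pos hx hy).le]

lemma filter_int_of_mem {A : Finset (Fin n)} {P} (hP : IsPart P) (hA : A ∈ P) :
    P.filter (· ⊆ A) = {A} := by
  ext B
  simp only [Finset.mem_filter, Finset.mem_singleton]
  constructor
  · rintro ⟨hBP, hBA⟩
    by_contra hne
    have hd := hP.2 B hBP A hA hne
    obtain ⟨x, hx⟩ := hP.1 B hBP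
    exact (Finset.disjoint_left.1 hd) hx (hBA hx)
  · rintro rfl
    exact ⟨hA, Finset.Subset.refl _⟩

lemma main_bound : ∀ (k : ℕ) (P : Finset (Finset (Fin n))) (A : Finset (Fin n)),
    IsPart P → P.card = k → Compat A P →
    1 ≤ (P.filter (· ⊆ A)).card → (P.filter (· ⊆ A)).card < k →
    ∑ c ∈ HF k P, ((JLevel A c : ℝ))⁻¹
      ≤ 2 / ((k.choose ((P.filter (· ⊆ A)).card)) : ℝ) * (Dd k : ℝ) := by
  intro k
  induction k with
  | zero => intro P A _ _ _ h1 h2; omega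
  | succ k ih =>
    intro P A hP hcard hcompat hb1 hbk
    have hk1 : 1 ≤ k := by omega
    set b := (P.filter (· ⊆ A)).card with hbdef
    have hPextcard : (P.filter (fun B => ¬ B ⊆ A)).card = k + 1 - b := by
      have := Finset.card_filter_add_card_filter_not (s := P) (p := (· ⊆ A))
      omega
    have hint_ext_mem : ∀ B ∈ P, ¬ B ⊆ A → Disjoint B A := by
      intro B hB hns
      by_contra hd
      exact hns (hcompat B hB hd)
    -- pointwise bound on each inner sum
    have key : ∀ Q ∈ P.powersetCard 2,
        ∑ c' ∈ HF k (mP P Q), ((JLevel A (extH (k+1) P c') : ℝ))⁻¹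
          ≤ (if A ∈ Q then ((k:ℝ))⁻¹
             else if Q ⊆ P.filter (· ⊆ A) then 2 / ((k.choose (b-1)) : ℝ)
             else if Q ⊆ P.filter (fun B => ¬ B ⊆ A) then 2 / ((k.choose b) : ℝ)
             else 0) * (Dd k : ℝ) := by
      intro Q hQ
      have hQP : Q ⊆ P := (Finset.mem_powersetCard.1 hQ).1
      have hmp : IsPart (mP P Q) := mP_isPart hP hQ
      have hmc : (mP P Q).card = k := by rw [mP_card hP hQ, hcard]; omega
      obtain ⟨B₁, B₂, hne, hQeq, hB₁P, hB₂P⟩ := pair_repr hQ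
      have hsup : Q.sup id = B₁ ∪ B₂ := by
        rw [hQeq]; simp [Finset.sup_insert, Finset.sup_singleton, Finset.sup_eq_union]
      have hsupmem : B₁ ∪ B₂ ∈ mP P Q := by
        rw [mP, ← hsup]
        exact Finset.mem_union_right _ (Finset.mem_singleton_self _)
      by_cases hAQ : A ∈ Q
      · rw [if_pos hAQ]
        have hAP : A ∈ P := hQP hAQ
        have hANe : A.Nonempty := hP.1 A hAP
        obtain ⟨C, hCP, hCA, hQAC⟩ : ∃ C, C ∈ P ∧ C ≠ A ∧ Q = {A, C} := by
          rw [hQeq] at hAQ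
          rcases Finset.mem_insert.1 hAQ with rfl | hA2
          · exact ⟨B₂, hB₂P, fun h => hne h.symm, hQeq⟩
          · rw [Finset.mem_singleton] at hA2
            subst hA2
            exact ⟨B₁, hB₁P, fun h => hne h, hQeq.trans (Finset.pair_comm B₁ A)⟩
        have hsup2 : Q.sup id = A ∪ C := by
          rw [hQAC]; simp [Finset.sup_insert, Finset.sup_singleton, Finset.sup_eq_union]
        have hdCA : Disjoint C A := hP.2 C hCP A hAP hCA
        have hnc : ¬ Compat A (mP P Q) := by
          intro hcpt
          have hmem : A ∪ C ∈ mP P Q := by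
            rw [← hsup2, mP]
            exact Finset.mem_union_right _ (Finset.mem_singleton_self _)
          have hnd : ¬ Disjoint (A ∪ C) A := by
            rw [Finset.disjoint_union_left]
            rintro ⟨hd, _⟩
            exact hANe.ne_empty (by simpa using disjoint_self.1 hd)
          have hsub := hcpt _ hmem hnd
          obtain ⟨x, hx⟩ := hP.1 C hCP
          exact (Finset.disjoint_left.1 hdCA) hx (hsub (Finset.mem_union_right _ hx))
        have hpt : ∀ c' ∈ HF k (mP P Q), JLevel A (extH (k+1) P c') = k := by
          intro c' hc'
          have hc'' := mem_HF.1 hc'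
          apply JLevel_eq_of_merge_top hk1 (ext_mem hk1 hP hQ hc'')
          · show A ∈ extH (k+1) P c' (k+1)
            unfold extH; rw [if_pos rfl]; exact hAP
          · intro m hm
            have he : extH (k+1) P c' m = c' m := by
              unfold extH; rw [if_neg (by omega)]
            rw [he]
            exact never_mem hmp hnc hc'' m
        calc ∑ c' ∈ HF k (mP P Q), ((JLevel A (extH (k+1) P c') : ℝ))⁻¹
            = ∑ c' ∈ HF k (mP P Q), ((k:ℝ))⁻¹ :=
              Finset.sum_congr rfl (fun c' hc' => by rw [hpt c' hc'])
          _ = (Dd k : ℝ) * ((k:ℝ))⁻¹ := by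
              rw [Finset.sum_const, HF_card k _ hk1 hmp hmc, nsmul_eq_mul]
          _ ≤ ((k:ℝ))⁻¹ * (Dd k : ℝ) := le_of_eq (mul_comm _ _)
      · rw [if_neg hAQ]
        have hB₁Q : B₁ ∈ Q := by rw [hQeq]; simp
        have hB₂Q : B₂ ∈ Q := by rw [hQeq]; simp
        by_cases hintQ : Q ⊆ P.filter (· ⊆ A)
        · rw [if_pos hintQ]
          have hB₁A : B₁ ⊆ A := (Finset.mem_filter.1 (hintQ hB₁Q)).2
          have hB₂A : B₂ ⊆ A := (Finset.mem_filter.1 (hintQ hB₂Q)).2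
          have hANP : A ∉ P := by
            intro hAP
            have := hintQ hB₁Q
            rw [filter_int_of_mem hP hAP] at this
            rw [Finset.mem_singleton] at this
            exact hAQ (this ▸ hB₁Q)
          have hb2 : 2 ≤ b := by
            have h := Finset.card_le_card hintQ
            rw [(Finset.mem_powersetCard.1 hQ).2] at h
            omega
          have hcompat' : Compat A (mP P Q) := by
            intro B hB hnd
            rcases Finset.mem_union.1 hB with h | h
            · exact hcompat B (Finset.mem_sdiff.1 h).1 hnd
            · rw [Finset.mem_singleton] at h
              subst h
              rw [hsup]
              exact Finset.union_subset hB₁A hB₂A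
          have hfil : (mP P Q).filter (· ⊆ A)
              = ((P.filter (· ⊆ A)) \ Q) ∪ {B₁ ∪ B₂} := by
            ext B
            simp only [Finset.mem_filter, Finset.mem_union, Finset.mem_sdiff, mP,
              Finset.mem_singleton, hsup]
            constructor
            · rintro ⟨h | h, hBA⟩
              · exact Or.inl ⟨⟨h.1, hBA⟩, h.2⟩
              · exact Or.inr h
            · rintro (⟨⟨hBP, hBA⟩, hBQ⟩ | rfl)
              · exact ⟨Or.inl ⟨hBP, hBQ⟩, hBA⟩
              · exact ⟨Or.inr rfl, Finset.union_subset hB₁A hB₂A⟩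
          have hfilcard : ((mP P Q).filter (· ⊆ A)).card = b - 1 := by
            rw [hfil]
            have hQint : Q ⊆ P.filter (· ⊆ A) := hintQ
            have hcs : ((P.filter (· ⊆ A)) \ Q).card = b - 2 := by
              rw [Finset.card_sdiff_of_subset hQint, (Finset.mem_powersetCard.1 hQ).2]
            have hnm : B₁ ∪ B₂ ∉ (P.filter (· ⊆ A)) \ Q := by
              intro h
              exact union_not_mem hP hB₁P hB₂P hne
                (Finset.mem_filter.1 (Finset.mem_sdiff.1 h).1).1
            rw [Finset.union_comm, ← Finset.insert_eq,
              Finset.card_insert_of_notMem hnm, hcs]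
            omega
          have hpt : ∀ c' ∈ HF k (mP P Q),
              JLevel A (extH (k+1) P c') = JLevel A c' := by
            intro c' hc'
            have hc'' := mem_HF.1 hc'
            have h := JLevel_trunc hk1 (ext_mem hk1 hP hQ hc'')
              (Or.inl (by
                show A ∉ extH (k+1) P c' (k+1)
                unfold extH; rw [if_pos rfl]; exact hANP))
            rwa [truncH_extH hc''] at h
          have := ih (mP P Q) A hmp hmc hcompat'
            (by rw [hfilcard]; omega) (by rw [hfilcard]; omega)
          rw [hfilcard] at this
          calc ∑ c' ∈ HF k (mP P Q), ((JLevel A (extH (k+1) P c') : ℝ))⁻¹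
              = ∑ c' ∈ HF k (mP P Q), ((JLevel A c' : ℝ))⁻¹ :=
                Finset.sum_congr rfl (fun c' hc' => by rw [hpt c' hc'])
            _ ≤ 2 / ((k.choose (b-1)) : ℝ) * (Dd k : ℝ) := this
        · rw [if_neg hintQ]
          by_cases hextQ : Q ⊆ P.filter (fun B => ¬ B ⊆ A)
          · rw [if_pos hextQ]
            have hB₁E : ¬ B₁ ⊆ A := by
              have := hextQ hB₁Q; exact (Finset.mem_filter.1 this).2
            have hB₂E : ¬ B₂ ⊆ A := by
              have := hextQ hB₂Q; exact (Finset.mem_filter.1 this).2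
            have hd₁ : Disjoint B₁ A := hint_ext_mem B₁ hB₁P hB₁E
            have hd₂ : Disjoint B₂ A := hint_ext_mem B₂ hB₂P hB₂E
            have hcompat' : Compat A (mP P Q) := by
              intro B hB hnd
              rcases Finset.mem_union.1 hB with h | h
              · exact hcompat B (Finset.mem_sdiff.1 h).1 hnd
              · rw [Finset.mem_singleton] at h
                subst h
                rw [hsup] at hnd
                rw [Finset.disjoint_union_left] at hnd
                exact absurd ⟨hd₁, hd₂⟩ hnd
            have hfil : (mP P Q).filter (· ⊆ A) = P.filter (· ⊆ A) := by
              ext B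
              simp only [Finset.mem_filter, Finset.mem_union, Finset.mem_sdiff, mP,
                Finset.mem_singleton, hsup]
              constructor
              · rintro ⟨h | h, hBA⟩
                · exact ⟨h.1, hBA⟩
                · subst h
                  exact absurd ((Finset.union_subset_iff.1 hBA).1) hB₁E
              · rintro ⟨hBP, hBA⟩
                have hBQ : B ∉ Q := by
                  intro hBQ
                  exact (Finset.mem_filter.1 (hextQ hBQ)).2 hBA
                exact ⟨Or.inl ⟨hBP, hBQ⟩, hBA⟩
            have hbk' : b < k := by
              have hdisj : Disjoint (P.filter (· ⊆ A)) Q := by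
                rw [Finset.disjoint_left]
                intro B hB hBQ
                exact (Finset.mem_filter.1 (hextQ hBQ)).2 (Finset.mem_filter.1 hB).2
              have hsub : (P.filter (· ⊆ A)) ∪ Q ⊆ P :=
                Finset.union_subset (Finset.filter_subset _ _) hQP
              have := Finset.card_le_card hsub
              rw [Finset.card_union_of_disjoint hdisj,
                (Finset.mem_powersetCard.1 hQ).2, hcard] at this
              omega
            have hpt : ∀ c' ∈ HF k (mP P Q),
                JLevel A (extH (k+1) P c') = JLevel A c' := by
              intro c' hc'
              have hc'' := mem_HF.1 hc'
              have hcase : A ∉ extH (k+1) P c' (k+1) ∨ A ∈ extH (k+1) P c' k := by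
                by_cases hAP : A ∈ P
                · right
                  have he : extH (k+1) P c' k = mP P Q := by
                    unfold extH; rw [if_neg (by omega)]; exact hc''.2.1
                  rw [he, mP]
                  exact Finset.mem_union_left _ (Finset.mem_sdiff.2 ⟨hAP, hAQ⟩)
                · left
                  show A ∉ extH (k+1) P c' (k+1)
                  unfold extH; rw [if_pos rfl]; exact hAP
              have h := JLevel_trunc hk1 (ext_mem hk1 hP hQ hc'') hcase
              rwa [truncH_extH hc''] at h
            have hihres := ih (mP P Q) A hmp hmc hcompat'
              (by rw [hfil]; omega) (by rw [hfil]; omega)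
            rw [hfil] at hihres
            calc ∑ c' ∈ HF k (mP P Q), ((JLevel A (extH (k+1) P c') : ℝ))⁻¹
                = ∑ c' ∈ HF k (mP P Q), ((JLevel A c' : ℝ))⁻¹ :=
                  Finset.sum_congr rfl (fun c' hc' => by rw [hpt c' hc'])
              _ ≤ 2 / ((k.choose b) : ℝ) * (Dd k : ℝ) := hihres
          · rw [if_neg hextQ]
            -- mixed merge: A can never become a block
            obtain ⟨Bi, hBiQ, hBiA⟩ : ∃ Bi ∈ Q, Bi ⊆ A := by
              by_contra hcon
              push_neg at hcon
              exact hextQ (fun B hB => Finset.mem_filter.2 ⟨hQP hB, hcon B hB⟩)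
            obtain ⟨Be, hBeQ, hBeA⟩ : ∃ Be ∈ Q, ¬ Be ⊆ A := by
              by_contra hcon
              push_neg at hcon
              exact hintQ (fun B hB => Finset.mem_filter.2 ⟨hQP hB, hcon B hB⟩)
            have hBine : Bi ≠ Be := fun h => hBeA (h ▸ hBiA)
            have hQeq2 : Q = {Bi, Be} := by
              symm
              apply Finset.eq_of_subset_of_card_le
              · intro x hx
                rcases Finset.mem_insert.1 hx with rfl | hx
                · exact hBiQ
                · rw [Finset.mem_singleton] at hx; exact hx ▸ hBeQ
              · rw [(Finset.mem_powersetCard.1 hQ).2, Finset.card_pair hBine]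
            have hsup3 : Q.sup id = Bi ∪ Be := by
              rw [hQeq2]; simp [Finset.sup_insert, Finset.sup_singleton, Finset.sup_eq_union]
            have hANP : A ∉ P := by
              intro hAP
              have hBiint : Bi ∈ P.filter (· ⊆ A) :=
                Finset.mem_filter.2 ⟨hQP hBiQ, hBiA⟩
              rw [filter_int_of_mem hP hAP, Finset.mem_singleton] at hBiint
              exact hAQ (hBiint ▸ hBiQ)
            have hnc : ¬ Compat A (mP P Q) := by
              intro hcpt
              have hmem : Bi ∪ Be ∈ mP P Q := by
                rw [mP, ← hsup3]
                exact Finset.mem_union_right _ (Finset.mem_singleton_self _)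
              have hnd : ¬ Disjoint (Bi ∪ Be) A := by
                rw [Finset.disjoint_union_left]
                rintro ⟨hd, _⟩
                obtain ⟨x, hx⟩ := hP.1 Bi (hQP hBiQ)
                exact (Finset.disjoint_left.1 hd) hx (hBiA hx)
              exact hBeA ((Finset.union_subset_iff.1 (hcpt _ hmem hnd)).2)
            have hpt : ∀ c' ∈ HF k (mP P Q), JLevel A (extH (k+1) P c') = 0 := by
              intro c' hc'
              have hc'' := mem_HF.1 hc'
              apply JLevel_eq_zero_of_never
              intro m
              by_cases hm : m = k + 1
              · subst hm
                show A ∉ extH (k+1) P c' (k+1)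
                unfold extH; rw [if_pos rfl]; exact hANP
              · have he : extH (k+1) P c' m = c' m := by unfold extH; rw [if_neg hm]
                rw [he]
                exact never_mem hmp hnc hc'' m
            have : ∑ c' ∈ HF k (mP P Q), ((JLevel A (extH (k+1) P c') : ℝ))⁻¹ = 0 := by
              apply Finset.sum_eq_zero
              intro c' hc'
              rw [hpt c' hc']
              simp
            rw [this, zero_mul]
    rw [sum_decomp hk1 hP hcard]
    refine le_trans (Finset.sum_le_sum key) ?_
    -- now compute the sum of bounds
    have hD0 : (0:ℝ) ≤ (Dd k : ℝ) := Nat.cast_nonneg _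
    rw [← Finset.sum_filter_add_sum_filter_not (P.powersetCard 2) (fun Q => A ∈ Q)]
    rw [← Finset.sum_filter_add_sum_filter_not
      ((P.powersetCard 2).filter (fun Q => ¬ A ∈ Q)) (fun Q => Q ⊆ P.filter (· ⊆ A))]
    rw [← Finset.sum_filter_add_sum_filter_not
      ((((P.powersetCard 2).filter (fun Q => ¬ A ∈ Q))).filter
        (fun Q => ¬ Q ⊆ P.filter (· ⊆ A))) (fun Q => Q ⊆ P.filter (fun B => ¬ B ⊆ A))]
    set S1 := (P.powersetCard 2).filter (fun Q => A ∈ Q) with hS1def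
    set S2 := ((P.powersetCard 2).filter (fun Q => ¬ A ∈ Q)).filter
      (fun Q => Q ⊆ P.filter (· ⊆ A)) with hS2def
    set S3 := ((((P.powersetCard 2).filter (fun Q => ¬ A ∈ Q))).filter
        (fun Q => ¬ Q ⊆ P.filter (· ⊆ A))).filter
      (fun Q => Q ⊆ P.filter (fun B => ¬ B ⊆ A)) with hS3def
    set S4 := ((((P.powersetCard 2).filter (fun Q => ¬ A ∈ Q))).filter
        (fun Q => ¬ Q ⊆ P.filter (· ⊆ A))).filter
      (fun Q => ¬ Q ⊆ P.filter (fun B => ¬ B ⊆ A)) with hS4def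
    have e1 : ∑ Q ∈ S1, (if A ∈ Q then ((k:ℝ))⁻¹
             else if Q ⊆ P.filter (· ⊆ A) then 2 / ((k.choose (b-1)) : ℝ)
             else if Q ⊆ P.filter (fun B => ¬ B ⊆ A) then 2 / ((k.choose b) : ℝ)
             else 0) * (Dd k : ℝ)
        = (S1.card : ℝ) * (((k:ℝ))⁻¹ * (Dd k : ℝ)) := by
      rw [Finset.sum_congr rfl (fun Q hQf => by
        rw [if_pos (Finset.mem_filter.1 hQf).2] :
        ∀ Q ∈ S1, _ = ((k:ℝ))⁻¹ * (Dd k : ℝ)), Finset.sum_const, nsmul_eq_mul]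
    have e2 : ∑ Q ∈ S2, (if A ∈ Q then ((k:ℝ))⁻¹
             else if Q ⊆ P.filter (· ⊆ A) then 2 / ((k.choose (b-1)) : ℝ)
             else if Q ⊆ P.filter (fun B => ¬ B ⊆ A) then 2 / ((k.choose b) : ℝ)
             else 0) * (Dd k : ℝ)
        = (S2.card : ℝ) * (2 / ((k.choose (b-1)) : ℝ) * (Dd k : ℝ)) := by
      rw [Finset.sum_congr rfl (fun Q hQf => by
        rw [if_neg (Finset.mem_filter.1 (Finset.mem_filter.1 hQf).1).2,
          if_pos (Finset.mem_filter.1 hQf).2] :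
        ∀ Q ∈ S2, _ = 2 / ((k.choose (b-1)) : ℝ) * (Dd k : ℝ)), Finset.sum_const,
        nsmul_eq_mul]
    have e3 : ∑ Q ∈ S3, (if A ∈ Q then ((k:ℝ))⁻¹
             else if Q ⊆ P.filter (· ⊆ A) then 2 / ((k.choose (b-1)) : ℝ)
             else if Q ⊆ P.filter (fun B => ¬ B ⊆ A) then 2 / ((k.choose b) : ℝ)
             else 0) * (Dd k : ℝ)
        = (S3.card : ℝ) * (2 / ((k.choose b) : ℝ) * (Dd k : ℝ)) := by
      rw [Finset.sum_congr rfl (fun Q hQf => by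
        rw [if_neg (Finset.mem_filter.1 (Finset.mem_filter.1
            (Finset.mem_filter.1 hQf).1).1).2,
          if_neg (Finset.mem_filter.1 (Finset.mem_filter.1 hQf).1).2,
          if_pos (Finset.mem_filter.1 hQf).2] :
        ∀ Q ∈ S3, _ = 2 / ((k.choose b) : ℝ) * (Dd k : ℝ)), Finset.sum_const,
        nsmul_eq_mul]
    have e4 : ∑ Q ∈ S4, (if A ∈ Q then ((k:ℝ))⁻¹
             else if Q ⊆ P.filter (· ⊆ A) then 2 / ((k.choose (b-1)) : ℝ)
             else if Q ⊆ P.filter (fun B => ¬ B ⊆ A) then 2 / ((k.choose b) : ℝ)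
             else 0) * (Dd k : ℝ) = 0 := by
      apply Finset.sum_eq_zero
      intro Q hQf
      rw [if_neg (Finset.mem_filter.1 (Finset.mem_filter.1
          (Finset.mem_filter.1 hQf).1).1).2,
        if_neg (Finset.mem_filter.1 (Finset.mem_filter.1 hQf).1).2,
        if_neg (Finset.mem_filter.1 hQf).2, zero_mul]
    rw [e1, e2, e3, e4, add_zero]
    -- card bounds
    have hS2card : S2.card ≤ b.choose 2 := by
      have hsub : S2 ⊆ (P.filter (· ⊆ A)).powersetCard 2 := by
        intro Q hQf
        have h1 := Finset.mem_filter.1 hQf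
        have h2 := Finset.mem_filter.1 h1.1
        exact Finset.mem_powersetCard.2 ⟨h1.2, (Finset.mem_powersetCard.1 h2.1).2⟩
      have := Finset.card_le_card hsub
      rwa [Finset.card_powersetCard, ← hbdef] at this
    have hS3card : S3.card ≤ (k+1-b).choose 2 := by
      have hsub : S3 ⊆ (P.filter (fun B => ¬ B ⊆ A)).powersetCard 2 := by
        intro Q hQf
        have h1 := Finset.mem_filter.1 hQf
        have h2 := Finset.mem_filter.1 (Finset.mem_filter.1 h1.1).1
        exact Finset.mem_powersetCard.2 ⟨h1.2, (Finset.mem_powersetCard.1 h2.1).2⟩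
      have := Finset.card_le_card hsub
      rwa [Finset.card_powersetCard, hPextcard] at this
    have hv2 : (0:ℝ) ≤ 2 / ((k.choose (b-1)) : ℝ) * (Dd k : ℝ) := by positivity
    have hv3 : (0:ℝ) ≤ 2 / ((k.choose b) : ℝ) * (Dd k : ℝ) := by positivity
    have hRHS : (2:ℝ) / (((k+1).choose b) : ℝ) * (Dd (k+1) : ℝ)
        = 2 / (((k+1).choose b) : ℝ) * (((k+1).choose 2 : ℝ)) * (Dd k : ℝ) := by
      rw [Dd_succ hk1]
      push_cast
      ring
    rw [hRHS]
    by_cases hAP : A ∈ P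
    · -- b = 1
      have hb1' : b = 1 := by rw [hbdef, filter_int_of_mem hP hAP, Finset.card_singleton]
      have hS1card : S1.card ≤ k := by
        have hsub : S1 ⊆ (P.erase A).image (fun B => ({A, B} : Finset (Finset (Fin n)))) := by
          intro Q hQf
          have h1 := Finset.mem_filter.1 hQf
          obtain ⟨B₁, B₂, hne, hQeq, hB₁P, hB₂P⟩ := pair_repr h1.1
          have hAQ : A ∈ Q := h1.2
          obtain ⟨C, hCP, hCA, hQAC⟩ : ∃ C, C ∈ P ∧ C ≠ A ∧ Q = {A, C} := by
            rw [hQeq] at hAQ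
            rcases Finset.mem_insert.1 hAQ with rfl | hA2
            · exact ⟨B₂, hB₂P, fun h => hne h.symm, hQeq⟩
            · rw [Finset.mem_singleton] at hA2
              subst hA2
              exact ⟨B₁, hB₁P, fun h => hne h, hQeq.trans (Finset.pair_comm B₁ A)⟩
          exact Finset.mem_image.2 ⟨C, Finset.mem_erase.2 ⟨hCA, hCP⟩, hQAC.symm⟩
        have h1 := Finset.card_le_card hsub
        have h2 := Finset.card_image_le (s := P.erase A)
          (f := fun B => ({A, B} : Finset (Finset (Fin n))))
        have h3 : (P.erase A).card = k := by
          rw [Finset.card_erase_of_mem hAP, hcard]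
          omega
        omega
      have hS2card0 : S2.card = 0 := by
        have h := hS2card
        rw [hb1'] at h
        simpa using h
      rw [hS2card0, Nat.cast_zero, zero_mul, zero_add]
      simp only [hb1']
      have hv1 : (0:ℝ) ≤ ((k:ℝ))⁻¹ * (Dd k : ℝ) := by positivity
      have hv3' : (0:ℝ) ≤ 2 / ((k.choose 1) : ℝ) * (Dd k : ℝ) := by positivity
      have c1 : (S1.card : ℝ) ≤ (k:ℝ) := by exact_mod_cast hS1card
      have c3 : (S3.card : ℝ) ≤ ((k).choose 2 : ℝ) := by
        have h := hS3card
        rw [hb1', show k + 1 - 1 = k by omega] at h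
        exact_mod_cast h
      have t1 := mul_le_mul_of_nonneg_right c1 hv1
      have t3 := mul_le_mul_of_nonneg_right c3 hv3'
      have hNL := mul_le_mul_of_nonneg_right (NL1 (k := k) hk1) hD0
      linarith [t1, t3, hNL]
    · -- A ∉ P : S1 is empty
      have hS1card : S1.card = 0 := by
        rw [Finset.card_eq_zero]
        rw [hS1def, Finset.filter_eq_empty_iff]
        intro Q hQ2 hAQ
        exact hAP ((Finset.mem_powersetCard.1 hQ2).1 hAQ)
      rw [hS1card, Nat.cast_zero, zero_mul, zero_add]
      have hbk2 : b ≤ k := by omega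
      have c2 : (S2.card : ℝ) ≤ (b.choose 2 : ℝ) := by exact_mod_cast hS2card
      have c3 : (S3.card : ℝ) ≤ ((k+1-b).choose 2 : ℝ) := by exact_mod_cast hS3card
      have t2 := mul_le_mul_of_nonneg_right c2 hv2
      have t3 := mul_le_mul_of_nonneg_right c3 hv3
      have hNL := mul_le_mul_of_nonneg_right (NL2 (k := k) hb1 hbk2) hD0
      linarith [t2, t3, hNL]

end KC

/-- Expected reciprocal of the final level: `E(1/J_A) ≤ 2/C(n,i)` (with `1/J_A = 0` on
`{J_A = ∞}`, i.e. when no branch supports exactly the leaves in `A`). -/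
theorem stmt10 (n i : ℕ) (A : Finset (Fin n)) (hA : A.card = i)
    (hi : 1 ≤ i) (hin : i ≤ n - 1) :
    histExp n (fun c => ((JLevel A c : ℝ))⁻¹) ≤ 2 / (n.choose i : ℝ) := by
  classical
  have hn2 : 2 ≤ n := by omega
  set P₀ : Finset (Finset (Fin n)) := Finset.univ.image (fun i => ({i} : Finset (Fin n)))
    with hP₀
  have hSeq : {c | IsHistory n c} = KC.HistSet n P₀ := rfl
  have hP₀part : KC.IsPart P₀ := by
    constructor
    · intro B hB
      obtain ⟨x, _, rfl⟩ := Finset.mem_image.1 hB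
      exact Finset.singleton_nonempty x
    · intro B hB B' hB' hne
      obtain ⟨x, _, rfl⟩ := Finset.mem_image.1 hB
      obtain ⟨y, _, rfl⟩ := Finset.mem_image.1 hB'
      rw [Finset.disjoint_singleton_left, Finset.mem_singleton]
      intro h
      exact hne (h ▸ rfl)
  have hP₀card : P₀.card = n := by
    rw [hP₀, Finset.card_image_of_injective _ Finset.singleton_injective,
      Finset.card_univ, Fintype.card_fin]
  have hcompat : KC.Compat A P₀ := by
    intro B hB hd
    obtain ⟨x, _, rfl⟩ := Finset.mem_image.1 hB
    rw [Finset.disjoint_singleton_left] at hd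
    rw [Finset.singleton_subset_iff]
    exact not_not.1 hd
  have hfil : P₀.filter (· ⊆ A) = A.image (fun a => ({a} : Finset (Fin n))) := by
    ext B
    simp only [Finset.mem_filter, Finset.mem_image, hP₀, Finset.mem_univ, true_and]
    constructor
    · rintro ⟨⟨x, rfl⟩, hBA⟩
      exact ⟨x, Finset.singleton_subset_iff.1 hBA, rfl⟩
    · rintro ⟨x, hx, rfl⟩
      exact ⟨⟨x, rfl⟩, Finset.singleton_subset_iff.2 hx⟩
  have hbcard : (P₀.filter (· ⊆ A)).card = i := by
    rw [hfil, Finset.card_image_of_injective _ Finset.singleton_injective, hA]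
  rw [histExp]
  have hfs : {c | IsHistory n c} = ↑(KC.HF n P₀) := by
    rw [hSeq]
    exact (Set.Finite.coe_toFinset _).symm
  rw [hfs, finsum_mem_coe_finset, Set.ncard_coe_finset]
  rw [KC.HF_card n P₀ (by omega) hP₀part hP₀card]
  have hmain := KC.main_bound n P₀ A hP₀part hP₀card hcompat
    (by rw [hbcard]; omega) (by rw [hbcard]; omega)
  rw [hbcard] at hmain
  rw [div_le_iff₀ (by exact_mod_cast KC.Dd_pos n : (0:ℝ) < (KC.Dd n : ℝ))]
  exact hmain
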